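/- Let V be a subspace of a vector space W over a field, let α ∈ Λ^p V, and suppose θ₁,…,θ_m ∈ W are linearly independent modulo V (i.e. their images in W/V are linearly independent). Then α ∧ θ₁ ∧ ⋯ ∧ θ_m = 0 in Λ^(p+m) W if and only if α = 0. -/

import Mathlib

open CliffordAlgebra

private lemma contract_listProd_eq_zero {K W : Type*} [Field K] [AddCommGroup W] [Module K W]
    (f : Module.Dual K W) (l : List W) (h : ∀ v ∈ l, f v = 0) :
    contractRight ((l.map (ExteriorAlgebra.ι K)).prod) f = 0 := by
  induction l using List.reverseRecOn with
  | nil => simp [contractRight_one (0 : QuadraticForm K W) f]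
  | append_singleton l a ih =>
    rw [List.map_append, List.prod_append, List.map_singleton, List.prod_singleton,
      contractRight_mul_ι, ih (fun v hv => h v (by simp [hv])), h a (by simp)]
    simp

private lemma contract_mul_eq_zero {K W : Type*} [Field K] [AddCommGroup W] [Module K W]
    (V : Submodule K W) (p : ℕ) (α : ExteriorAlgebra K W)
    (hα : α ∈ Submodule.span K
      {x : ExteriorAlgebra K W | ∃ f : Fin p → W, (∀ i, f i ∈ V) ∧
        x = (List.ofFn fun i => ExteriorAlgebra.ι K (f i)).prod})
    (f : Module.Dual K W) (hfV : ∀ v ∈ V, f v = 0)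
    (l : List W) (hl : ∀ v ∈ l, f v = 0) :
    contractRight (α * (l.map (ExteriorAlgebra.ι K)).prod) f = 0 := by
  have := Submodule.span_induction (p := fun x _ =>
      contractRight (x * (l.map (ExteriorAlgebra.ι K)).prod) f = 0)
    (fun x hx => by
      obtain ⟨g, hg, rfl⟩ := hx
      have : (List.ofFn fun i => ExteriorAlgebra.ι K (g i)) = (List.ofFn g).map (ExteriorAlgebra.ι K) := by
        rw [List.map_ofFn]; rfl
      rw [this, ← List.prod_append, ← List.map_append]
      exact contract_listProd_eq_zero f _ (by
        intro v hv
        rcases List.mem_append.mp hv with hv | hv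
        · obtain ⟨i, rfl⟩ := List.mem_ofFn.mp hv
          exact hfV _ (hg i)
        · exact hl v hv))
    (by simp)
    (fun x y _ _ hx hy => by
      show contractRight ((x + y) * (l.map (ExteriorAlgebra.ι K)).prod) f = 0
      rw [add_mul, map_add, LinearMap.add_apply, hx, hy, add_zero])
    (fun c x _ hx => by
      show contractRight ((c • x) * (l.map (ExteriorAlgebra.ι K)).prod) f = 0
      rw [smul_mul_assoc, map_smul, LinearMap.smul_apply, hx, smul_zero])
    hα
  exact this

private lemma wedge_indep_aux {K W : Type*} [Field K] [AddCommGroup W] [Module K W]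
    (V : Submodule K W) (p : ℕ) (α : ExteriorAlgebra K W)
    (hα : α ∈ Submodule.span K
      {x : ExteriorAlgebra K W | ∃ f : Fin p → W, (∀ i, f i ∈ V) ∧
        x = (List.ofFn fun i => ExteriorAlgebra.ι K (f i)).prod}) :
    ∀ (m : ℕ) (θ : Fin m → W),
      LinearIndependent K (fun i => Submodule.Quotient.mk (p := V) (θ i)) →
      α * (List.ofFn fun i => ExteriorAlgebra.ι K (θ i)).prod = 0 → α = 0 := by
  intro m
  induction m with
  | zero => intro θ _ h; simpa using h
  | succ n ih =>
    intro θ hθ h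
    set b : Fin (n + 1) → W ⧸ V := fun i => Submodule.Quotient.mk (θ i) with hb
    let Bs : Module.Basis (Fin (n + 1)) K (Submodule.span K (Set.range b)) := Module.Basis.span hθ
    obtain ⟨g, hg⟩ := LinearMap.exists_extend (Bs.coord (Fin.last n))
    set f : W →ₗ[K] K := g.comp V.mkQ with hf
    have hfV : ∀ v ∈ V, f v = 0 := by
      intro v hv
      have : V.mkQ v = 0 := (Submodule.Quotient.mk_eq_zero V).mpr hv
      simp [hf, this]
    have hfθ : ∀ i, f (θ i) = if i = Fin.last n then 1 else 0 := by
      intro i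
      have hmem : b i ∈ Submodule.span K (Set.range b) := Submodule.subset_span ⟨i, rfl⟩
      have h1 : f (θ i) = g ((Submodule.span K (Set.range b)).subtype ⟨b i, hmem⟩) := rfl
      rw [h1, ← LinearMap.comp_apply, hg]
      have h2 : (⟨b i, hmem⟩ : Submodule.span K (Set.range b)) = Bs i :=
        (Module.Basis.span_apply hθ i).symm
      rw [h2, Module.Basis.coord_apply, Module.Basis.repr_self, Finsupp.single_apply]
    -- split off the last factor
    have hsplit : (List.ofFn fun i : Fin (n+1) => ExteriorAlgebra.ι K (θ i)) =
        (List.ofFn fun i : Fin n => ExteriorAlgebra.ι K (θ i.castSucc)) ++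
          [ExteriorAlgebra.ι K (θ (Fin.last n))] := by
      rw [List.ofFn_succ', List.concat_eq_append]
    rw [hsplit, List.prod_append, List.prod_singleton, ← mul_assoc] at h
    set l : List W := List.ofFn fun i : Fin n => θ i.castSucc with hldef
    have hlmap : (List.ofFn fun i : Fin n => ExteriorAlgebra.ι K (θ i.castSucc)) =
        l.map (ExteriorAlgebra.ι K) := by rw [hldef, List.map_ofFn]; rfl
    have hl : ∀ v ∈ l, f v = 0 := by
      intro v hv
      obtain ⟨i, rfl⟩ := List.mem_ofFn.mp hv
      rw [hfθ, if_neg (Fin.castSucc_lt_last i).ne]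
    have hc : contractRight (α * (l.map (ExteriorAlgebra.ι K)).prod) f = 0 :=
      contract_mul_eq_zero V p α hα f hfV l hl
    have h0 : contractRight
        ((α * (l.map (ExteriorAlgebra.ι K)).prod) * ExteriorAlgebra.ι K (θ (Fin.last n))) f = 0 := by
      rw [← hlmap, h]; simp
    rw [contractRight_mul_ι, hc, hfθ, if_pos rfl, one_smul, zero_mul, sub_zero] at h0
    refine ih (fun i => θ i.castSucc) ?_ (by rw [hlmap]; exact h0)
    exact hθ.comp Fin.castSucc (Fin.castSucc_injective n)

theorem exterior_wedge_indep_mod_eq_zero_iff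
    {K W : Type*} [Field K] [AddCommGroup W] [Module K W] [FiniteDimensional K W]
    (V : Submodule K W) (p m : ℕ) (α : ExteriorAlgebra K W)
    (hα : α ∈ Submodule.span K
      {x : ExteriorAlgebra K W | ∃ f : Fin p → W, (∀ i, f i ∈ V) ∧
        x = (List.ofFn fun i => ExteriorAlgebra.ι K (f i)).prod})
    (θ : Fin m → W)
    (hθ : LinearIndependent K fun i => Submodule.Quotient.mk (p := V) (θ i)) :
    α * (List.ofFn fun i => ExteriorAlgebra.ι K (θ i)).prod = 0 ↔ α = 0 := by
  constructor
  · exact wedge_indep_aux V p α hα m θ hθ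
  · rintro rfl; rw [zero_mul]
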